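/- Let x, y be generators of a grid diagram of size N and let D ∈ 𝒟(x,y). Then M(x) − M(y) = μ(D) − 2·Σ_i n_{O_i}(D); that is, the absolute Maslov grading defined by the J-formula refines the relative Maslov grading computed from domains. -/

import Mathlib

/-- A generator of a grid diagram of size `N`: a permutation of `ℤ/N`. -/
abbrev GridGen (N : ℕ) := Equiv.Perm (ZMod N)

/-- The alternating corner sum of a 2-chain `D` at the lattice point `(a, b)`. -/
def cornerSum (N : ℕ) (D : ZMod N → ZMod N → ℤ) (a b : ZMod N) : ℤ :=
  D a b - D (a - 1) b - D a (b - 1) + D (a - 1) (b - 1)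

/-- `D` is a domain from the generator `x` to the generator `y`: the alternating
corner sum at a lattice point `p` is `1` if `p ∈ x \ y`, `-1` if `p ∈ y \ x`, and
`0` otherwise. -/
def IsGridDomain (N : ℕ) (x y : GridGen N) (D : ZMod N → ZMod N → ℤ) : Prop :=
  ∀ a b : ZMod N, cornerSum N D a b =
    if x a = b ∧ y a ≠ b then 1 else if y a = b ∧ x a ≠ b then -1 else 0

/-- The point measure `n_p(D)` at the lattice point `p = (a, b)`: the average of
the values of `D` on the four squares around `p`. -/
def gridNp (N : ℕ) (D : ZMod N → ZMod N → ℤ) (a b : ZMod N) : ℚ :=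
  ((D a b : ℚ) + (D (a - 1) b : ℚ) + (D a (b - 1) : ℚ) + (D (a - 1) (b - 1) : ℚ)) / 4

/-- The Maslov index `μ(D) = Σ_i (n_{(i, x i)}(D) + n_{(i, y i)}(D))`. -/
def maslovIndex (N : ℕ) [NeZero N] (x y : GridGen N) (D : ZMod N → ZMod N → ℤ) : ℚ :=
  ∑ i : ZMod N, (gridNp N D i (x i) + gridNp N D i (y i))
/-- `J(a, b) = 1/2` if `(a₁ - b₁)(a₂ - b₂) > 0` and `0` otherwise. -/
noncomputable def Jpt (p q : ℝ × ℝ) : ℚ :=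
  if 0 < (p.1 - q.1) * (p.2 - q.2) then 1 / 2 else 0

/-- The planar point corresponding to a coordinate `(i, b)` of a generator,
representing `ℤ/N` by `{0, 1, …, N-1} ⊂ ℝ`. -/
noncomputable def genPt (N : ℕ) (i b : ZMod N) : ℝ × ℝ :=
  ((ZMod.val i : ℝ), (ZMod.val b : ℝ))

/-- The planar point of the marking in column `i` determined by the permutation
`σ`: the centre `(i + 1/2, σ i + 1/2)` of the square `(i, σ i)`. -/
noncomputable def markPt (N : ℕ) (σ : GridGen N) (i : ZMod N) : ℝ × ℝ :=
  ((ZMod.val i : ℝ) + 1 / 2, (ZMod.val (σ i) : ℝ) + 1 / 2)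

/-- The absolute Maslov grading `M(x) = J(x - 𝕆, x - 𝕆) + 1`, with `J` extended
bilinearly to formal sums of points. -/
noncomputable def MaslovGrading (N : ℕ) [NeZero N] (σO : GridGen N) (x : GridGen N) : ℚ :=
  (∑ i : ZMod N, ∑ j : ZMod N,
      (Jpt (genPt N i (x i)) (genPt N j (x j)) - Jpt (genPt N i (x i)) (markPt N σO j) -
        Jpt (markPt N σO i) (genPt N j (x j)) + Jpt (markPt N σO i) (markPt N σO j))) + 1

/-- The absolute Alexander grading
`A(x) = J(x - (𝕏 + 𝕆)/2, 𝕏 - 𝕆) - (N - 1)/2`, with `J` extended bilinearly to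
formal sums of points. -/
noncomputable def AlexGrading (N : ℕ) [NeZero N] (σO σX : GridGen N) (x : GridGen N) : ℚ :=
  (∑ i : ZMod N, ∑ j : ZMod N,
      (Jpt (genPt N i (x i)) (markPt N σX j) - Jpt (genPt N i (x i)) (markPt N σO j) -
        (1 / 2) * Jpt (markPt N σX i) (markPt N σX j) +
        (1 / 2) * Jpt (markPt N σX i) (markPt N σO j) -
        (1 / 2) * Jpt (markPt N σO i) (markPt N σX j) +
        (1 / 2) * Jpt (markPt N σO i) (markPt N σO j))) - ((N : ℚ) - 1) / 2

/-! ### Auxiliary machinery -/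

namespace GridAux

open Finset

set_option linter.unusedSectionVars false

/-- Indicator of a proposition, valued in `ℚ`. -/
def chi (P : Prop) [Decidable P] : ℚ := if P then 1 else 0

lemma chi_congr {P Q : Prop} [Decidable P] [Decidable Q] (h : P ↔ Q) : chi P = chi Q := by
  unfold chi; split_ifs with h1 h2 <;> tauto

lemma chi_lt_swap (m n : ℕ) : chi (n < m) = 1 - chi (m < n) - chi (m = n) := by
  unfold chi; split_ifs <;> (try norm_num) <;> omega

lemma chi_lt_swap' (m n : ℕ) : chi (n < m) = 1 - chi (m ≤ n) := by
  unfold chi; split_ifs <;> (try norm_num) <;> omega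

lemma chi_le_split (m n : ℕ) : chi (m ≤ n) = chi (m < n) + chi (m = n) := by
  unfold chi; split_ifs <;> (try norm_num) <;> omega

lemma chi_le_swap (m n : ℕ) : chi (n ≤ m) = 1 - chi (m < n) := by
  unfold chi; split_ifs <;> (try norm_num) <;> omega

lemma chi_eq_swap (m n : ℕ) : chi (n = m) = 1 - chi (m < n) - chi (n < m) := by
  unfold chi; split_ifs <;> (try norm_num) <;> omega

lemma chi_int_le (m n : ℕ) : chi ((m : ℤ) ≤ (n : ℤ)) = chi (m ≤ n) := chi_congr (by omega)
lemma chi_int_eq (m n : ℕ) : chi ((m : ℤ) = (n : ℤ)) = chi (m = n) := chi_congr (by omega)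

lemma chi_pair_le (m α : ℤ) : chi (m ≤ α) + chi (m ≤ α - 1) = 2 * chi (m ≤ α) - chi (m = α) := by
  unfold chi; split_ifs <;> (try norm_num) <;> omega

lemma w_add (a b : ℕ) :
    (1/4) * (2 * chi (a ≤ b) - chi (a = b)) + (1/4) * (2 * chi (b ≤ a) - chi (b = a)) = 1/2 := by
  unfold chi; split_ifs <;> (try norm_num) <;> omega

/-- The central pointwise identity. -/
lemma ptwise (a b p q r s v : ℕ) (h1 : (a = b) ↔ (p = q)) (h2 : (a = b) ↔ (r = s)) :
    (1/2) * (chi (b < a) * chi (q < p) + chi (a < b) * chi (p < q))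
      - (1/2) * (chi (b < a) * chi (s < r) + chi (a < b) * chi (r < s))
      - 2 * ((1/2) * (chi (b < a) * chi (v < p) + chi (a ≤ b) * chi (p ≤ v)))
      + 2 * ((1/2) * (chi (b < a) * chi (v < r) + chi (a ≤ b) * chi (r ≤ v)))
    = ((1/4) * (2 * chi (a ≤ b) - chi (a = b)) *
          (2 * chi (p ≤ q) - chi (p = q) + 2 * chi (p ≤ s) - chi (p = s)
            - 2 * chi (r ≤ q) + chi (r = q) - 2 * chi (r ≤ s) + chi (r = s))
        - 2 * chi (a ≤ b) * (chi (p ≤ v) - chi (r ≤ v)))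
      + (- (1/2) * chi (p < q) + (1/2) * chi (r < s) + chi (p ≤ v) - chi (r ≤ v)
        - (1/4) * (2 * chi (a ≤ b) - chi (a = b)) *
            (chi (p < s) - chi (s < p) + chi (q < r) - chi (r < q))) := by
  have s13 : chi (p = q) = chi (a = b) := chi_congr h1.symm
  have s14 : chi (r = s) = chi (a = b) := chi_congr h2.symm
  simp only [chi_lt_swap a b, chi_lt_swap p q, chi_lt_swap r s,
    chi_lt_swap' p v, chi_lt_swap' r v,
    chi_le_split a b, chi_le_split p q, chi_le_split r s,
    chi_le_swap s p, chi_le_swap q r, chi_eq_swap s p, chi_eq_swap q r,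
    s13, s14]
  ring

/-! #### `Jpt` computations -/

lemma cast_sub_pos (m n : ℕ) : (0 : ℝ) < (m : ℝ) - (n : ℝ) ↔ n < m := by
  rw [sub_pos, Nat.cast_lt]

lemma cast_sub_neg (m n : ℕ) : (m : ℝ) - (n : ℝ) < 0 ↔ m < n := by
  rw [sub_neg, Nat.cast_lt]

lemma cast_sub_half_pos (m n : ℕ) : (0 : ℝ) < (m : ℝ) - ((n : ℝ) + 1 / 2) ↔ n < m := by
  constructor
  · intro h
    by_contra hc
    push_neg at hc
    have : (m : ℝ) ≤ n := by exact_mod_cast hc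
    linarith
  · intro h
    have : (n : ℝ) + 1 ≤ m := by exact_mod_cast h
    linarith

lemma cast_sub_half_neg (m n : ℕ) : (m : ℝ) - ((n : ℝ) + 1 / 2) < 0 ↔ m ≤ n := by
  constructor
  · intro h
    by_contra hc
    push_neg at hc
    have : (n : ℝ) + 1 ≤ m := by exact_mod_cast hc
    linarith
  · intro h
    have : (m : ℝ) ≤ n := by exact_mod_cast h
    linarith

lemma cast_half_sub_pos (m n : ℕ) : (0 : ℝ) < ((m : ℝ) + 1 / 2) - (n : ℝ) ↔ n ≤ m := by
  constructor
  · intro h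
    by_contra hc
    push_neg at hc
    have : (m : ℝ) + 1 ≤ n := by exact_mod_cast hc
    linarith
  · intro h
    have : (n : ℝ) ≤ m := by exact_mod_cast h
    linarith

lemma cast_half_sub_neg (m n : ℕ) : ((m : ℝ) + 1 / 2) - (n : ℝ) < 0 ↔ m < n := by
  constructor
  · intro h
    by_contra hc
    push_neg at hc
    have : (n : ℝ) ≤ m := by exact_mod_cast hc
    linarith
  · intro h
    have : (m : ℝ) + 1 ≤ n := by exact_mod_cast h
    linarith

lemma ite_or_half {X Y : Prop} [Decidable X] [Decidable Y] (h : ¬(X ∧ Y)) :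
    (if X ∨ Y then (1 : ℚ)/2 else 0) = (1/2) * (chi X + chi Y) := by
  unfold chi; split_ifs <;> (try norm_num) <;> tauto

lemma Jpt_comm (p q : ℝ × ℝ) : Jpt p q = Jpt q p := by
  unfold Jpt
  have : (p.1 - q.1) * (p.2 - q.2) = (q.1 - p.1) * (q.2 - p.2) := by ring
  rw [this]

lemma Jgg (N : ℕ) (i b j c : ZMod N) :
    Jpt (genPt N i b) (genPt N j c) =
      (1/2) * (chi (j.val < i.val) * chi (c.val < b.val) +
        chi (i.val < j.val) * chi (b.val < c.val)) := by
  unfold Jpt genPt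
  rw [if_congr (mul_pos_iff.trans (by
        rw [cast_sub_pos, cast_sub_pos, cast_sub_neg, cast_sub_neg])) rfl rfl]
  rw [ite_or_half (by omega)]
  unfold chi
  split_ifs <;> (try norm_num) <;> omega

lemma Jgm (N : ℕ) (σ : GridGen N) (i b j : ZMod N) :
    Jpt (genPt N i b) (markPt N σ j) =
      (1/2) * (chi (j.val < i.val) * chi ((σ j).val < b.val) +
        chi (i.val ≤ j.val) * chi (b.val ≤ (σ j).val)) := by
  unfold Jpt genPt markPt
  rw [if_congr (mul_pos_iff.trans (by
        rw [cast_sub_half_pos, cast_sub_half_pos, cast_sub_half_neg, cast_sub_half_neg])) rfl rfl]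
  rw [ite_or_half (by omega)]
  unfold chi
  split_ifs <;> (try norm_num) <;> omega

/-! #### `ZMod` value arithmetic -/

section
variable (N : ℕ) [NeZero N]

lemma val_cast_self (a : ZMod N) : ((a.val : ℕ) : ZMod N) = a := ZMod.natCast_rightInverse a

lemma val_sub_one {a : ZMod N} (ha : a ≠ 0) : ((a - 1).val : ℤ) = (a.val : ℤ) - 1 := by
  have h1 : a.val < N := ZMod.val_lt a
  have h0 : a.val ≠ 0 := fun h => ha ((ZMod.val_eq_zero a).1 h)
  have key : a - 1 = ((a.val - 1 : ℕ) : ZMod N) := by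
    conv_lhs => rw [← val_cast_self N a]
    have : ((a.val - 1 : ℕ) : ZMod N) = (a.val : ℕ) - 1 := by
      push_cast [Nat.cast_sub (by omega : 1 ≤ a.val)]; ring
    rw [this]
  rw [key, ZMod.val_cast_of_lt (by omega)]
  push_cast [Nat.cast_sub (by omega : 1 ≤ a.val)]; ring

lemma val_zero_sub_one : ((((0 : ZMod N) - 1)).val : ℤ) = (N : ℤ) - 1 := by
  obtain ⟨m, rfl⟩ : ∃ m, N = m + 1 := ⟨N - 1, by have := NeZero.pos N; omega⟩
  rw [zero_sub, ZMod.val_neg_one]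
  push_cast; ring

lemma val_int_inj (i a : ZMod N) : ((i.val : ℤ) = (a.val : ℤ)) ↔ i = a := by
  constructor
  · intro h
    exact ZMod.val_injective N (by exact_mod_cast h)
  · rintro rfl; rfl

variable (x y : GridGen N)

/-! #### The canonical domain -/

def entf (z : GridGen N) (α β : ℤ) (i : ZMod N) : ℤ :=
  if (i.val : ℤ) ≤ α ∧ ((z i).val : ℤ) ≤ β then 1 else 0

def Gz (α β : ℤ) : ℤ := ∑ i : ZMod N, (entf N x α β i - entf N y α β i)

def D0 (a b : ZMod N) : ℤ := Gz N x y (a.val) (b.val)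

lemma Gz_neg_left {α : ℤ} (hα : α < 0) (β : ℤ) : Gz N x y α β = 0 := by
  apply Finset.sum_eq_zero; intro i _
  unfold entf
  rw [if_neg (by push_neg; intro h; omega), if_neg (by push_neg; intro h; omega)]
  ring

lemma Gz_neg_right (α : ℤ) {β : ℤ} (hβ : β < 0) : Gz N x y α β = 0 := by
  apply Finset.sum_eq_zero; intro i _
  unfold entf
  rw [if_neg (by rintro ⟨-, h⟩; omega), if_neg (by rintro ⟨-, h⟩; omega)]
  ring

lemma Gz_left_top {α : ℤ} (hα : (N : ℤ) - 1 ≤ α) (β : ℤ) : Gz N x y α β = 0 := by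
  unfold Gz
  have h : ∀ (z : GridGen N) (i : ZMod N), entf N z α β i
      = (fun c : ZMod N => if ((c.val : ℤ) ≤ β) then (1:ℤ) else 0) (z i) := by
    intro z i
    exact if_congr (and_iff_right (by have := ZMod.val_lt i; omega)) rfl rfl
  simp only [h]
  rw [Finset.sum_sub_distrib,
    Equiv.sum_comp x (fun c : ZMod N => if ((c.val : ℤ) ≤ β) then (1:ℤ) else 0),
    Equiv.sum_comp y (fun c : ZMod N => if ((c.val : ℤ) ≤ β) then (1:ℤ) else 0)]
  ring

lemma Gz_right_top (α : ℤ) {β : ℤ} (hβ : (N : ℤ) - 1 ≤ β) : Gz N x y α β = 0 := by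
  apply Finset.sum_eq_zero; intro i _
  unfold entf
  have h1 : ((x i).val : ℤ) ≤ β := by have := ZMod.val_lt (x i); omega
  have h2 : ((y i).val : ℤ) ≤ β := by have := ZMod.val_lt (y i); omega
  rw [if_congr (and_iff_left h1) rfl rfl, if_congr (and_iff_left h2) rfl rfl]
  ring

lemma D0_shift_left (a b : ZMod N) :
    D0 N x y (a - 1) b = Gz N x y ((a.val : ℤ) - 1) (b.val) := by
  by_cases ha : a = 0
  · subst ha
    show Gz N x y (((0:ZMod N) - 1).val) _ = _
    rw [show ((((0:ZMod N) - 1)).val : ℤ) = (N : ℤ) - 1 from val_zero_sub_one N]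
    rw [Gz_left_top N x y le_rfl, Gz_neg_left N x y (by simp [ZMod.val_zero])]
  · show Gz N x y (((a - 1)).val) _ = _
    rw [val_sub_one N ha]

lemma D0_shift_right (a b : ZMod N) :
    D0 N x y a (b - 1) = Gz N x y (a.val) ((b.val : ℤ) - 1) := by
  by_cases hb : b = 0
  · subst hb
    show Gz N x y _ (((0:ZMod N) - 1).val) = _
    rw [show ((((0:ZMod N) - 1)).val : ℤ) = (N : ℤ) - 1 from val_zero_sub_one N]
    rw [Gz_right_top N x y _ le_rfl, Gz_neg_right N x y _ (by simp [ZMod.val_zero])]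
  · show Gz N x y _ (((b - 1)).val) = _
    rw [val_sub_one N hb]

lemma D0_shift_both (a b : ZMod N) :
    D0 N x y (a - 1) (b - 1) = Gz N x y ((a.val : ℤ) - 1) ((b.val : ℤ) - 1) := by
  by_cases ha : a = 0
  · subst ha
    show Gz N x y (((0:ZMod N) - 1).val) _ = _
    rw [show ((((0:ZMod N) - 1)).val : ℤ) = (N : ℤ) - 1 from val_zero_sub_one N]
    rw [Gz_left_top N x y le_rfl, Gz_neg_left N x y (by simp [ZMod.val_zero])]
  · by_cases hb : b = 0
    · subst hb
      show Gz N x y ((a-1).val) (((0:ZMod N) - 1).val) = _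
      rw [show ((((0:ZMod N) - 1)).val : ℤ) = (N : ℤ) - 1 from val_zero_sub_one N]
      rw [Gz_right_top N x y _ le_rfl, Gz_neg_right N x y _ (by simp [ZMod.val_zero])]
    · show Gz N x y ((a-1).val) ((b-1).val) = _
      rw [val_sub_one N ha, val_sub_one N hb]

set_option maxHeartbeats 2000000 in
lemma cornerSum_D0 (a b : ZMod N) :
    cornerSum N (D0 N x y) a b
      = (if x a = b then 1 else 0) - (if y a = b then 1 else 0) := by
  unfold cornerSum
  rw [D0_shift_left, D0_shift_right, D0_shift_both]
  show Gz N x y (a.val) (b.val) - Gz N x y _ _ - Gz N x y _ _ + Gz N x y _ _ = _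
  unfold Gz
  rw [← Finset.sum_sub_distrib, ← Finset.sum_sub_distrib, ← Finset.sum_add_distrib]
  have key : ∀ i : ZMod N,
      (entf N x (a.val) (b.val) i - entf N y (a.val) (b.val) i
        - (entf N x ((a.val : ℤ) - 1) (b.val) i - entf N y ((a.val : ℤ) - 1) (b.val) i)
        - (entf N x (a.val) ((b.val : ℤ) - 1) i - entf N y (a.val) ((b.val : ℤ) - 1) i)
        + (entf N x ((a.val : ℤ) - 1) ((b.val : ℤ) - 1) i
          - entf N y ((a.val : ℤ) - 1) ((b.val : ℤ) - 1) i))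
      = (if i = a then (if x a = b then (1:ℤ) else 0) else 0)
        - (if i = a then (if y a = b then (1:ℤ) else 0) else 0) := by
    intro i
    have h1 : (if i = a then (if x a = b then (1:ℤ) else 0) else 0)
        = if ((i.val : ℤ) = (a.val : ℤ) ∧ ((x i).val : ℤ) = (b.val : ℤ)) then 1 else 0 := by
      by_cases h : i = a
      · subst h
        rw [if_pos rfl, if_congr (and_iff_right rfl) rfl rfl,
          if_congr (val_int_inj N (x i) b) rfl rfl]
      · rw [if_neg h, if_neg (by rw [val_int_inj]; tauto)]
    have h2 : (if i = a then (if y a = b then (1:ℤ) else 0) else 0)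
        = if ((i.val : ℤ) = (a.val : ℤ) ∧ ((y i).val : ℤ) = (b.val : ℤ)) then 1 else 0 := by
      by_cases h : i = a
      · subst h
        rw [if_pos rfl, if_congr (and_iff_right rfl) rfl rfl,
          if_congr (val_int_inj N (y i) b) rfl rfl]
      · rw [if_neg h, if_neg (by rw [val_int_inj]; tauto)]
    rw [h1, h2]
    unfold entf
    split_ifs <;> omega
  rw [Finset.sum_congr rfl (fun i _ => key i), Finset.sum_sub_distrib]
  rw [Finset.sum_ite_eq' univ a (fun _ => if x a = b then (1:ℤ) else 0),
    Finset.sum_ite_eq' univ a (fun _ => if y a = b then (1:ℤ) else 0)]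
  simp

lemma domain_rhs_eq (a b : ZMod N) :
    (if x a = b ∧ y a ≠ b then (1:ℤ) else if y a = b ∧ x a ≠ b then -1 else 0)
      = (if x a = b then 1 else 0) - (if y a = b then 1 else 0) := by
  split_ifs <;> simp_all

/-! #### Kernel of the corner-sum map -/

lemma kernel_struct (E : ZMod N → ZMod N → ℤ) (hE : ∀ a b, cornerSum N E a b = 0) :
    ∀ a b : ZMod N, E a b = E a 0 + E 0 b - E 0 0 := by
  have hval : ∀ (c : ZMod N), c ≠ 0 → (c - 1).val = c.val - 1 := by
    intro c hc; have := val_sub_one N hc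
    have h2 : c.val ≠ 0 := fun h => hc ((ZMod.val_eq_zero c).1 h)
    omega
  have col : ∀ n : ℕ, ∀ b : ZMod N, b.val = n →
      ∀ a, E a b - E (a-1) b = E a 0 - E (a-1) 0 := by
    intro n
    induction n with
    | zero =>
      intro b hb a
      have : b = 0 := (ZMod.val_eq_zero b).1 hb
      subst this; ring
    | succ k ih =>
      intro b hb a
      have hbne : b ≠ 0 := by
        intro h; subst h; rw [ZMod.val_zero] at hb; omega
      have h1 : (b - 1).val = k := by rw [hval b hbne, hb]; omega
      have hc := hE a b
      unfold cornerSum at hc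
      have hi := ih (b - 1) h1 a
      omega
  have row : ∀ n : ℕ, ∀ a : ZMod N, a.val = n →
      ∀ b, E a b = E a 0 + E 0 b - E 0 0 := by
    intro n
    induction n with
    | zero =>
      intro a ha b
      have : a = 0 := (ZMod.val_eq_zero a).1 ha
      subst this; ring
    | succ k ih =>
      intro a ha b
      have hane : a ≠ 0 := by
        intro h; subst h; rw [ZMod.val_zero] at ha; omega
      have h1 : (a - 1).val = k := by rw [hval a hane, ha]; omega
      have hcol := col (b.val) b rfl a
      have hcol0 := col ((0:ZMod N).val) (0:ZMod N) rfl a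
      have hi := ih (a - 1) h1 b
      omega
  intro a b; exact row a.val a rfl b

lemma maslov_kernel (σO : GridGen N) (E : ZMod N → ZMod N → ℤ)
    (hE : ∀ a b, cornerSum N E a b = 0) :
    maslovIndex N x y E = 2 * ∑ i : ZMod N, (E i (σO i) : ℚ) := by
  have hstruct := kernel_struct N E hE
  set f : ZMod N → ℚ := fun a => (E a 0 : ℚ) with hf
  set g : ZMod N → ℚ := fun b => (E 0 b : ℚ) - (E 0 0 : ℚ) with hg
  have hE' : ∀ a b, (E a b : ℚ) = f a + g b := by
    intro a b; rw [hstruct a b]; push_cast; simp only [hf, hg]; ring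
  have hnp : ∀ (a c : ZMod N), gridNp N E a c = (f a + f (a-1) + g c + g (c-1))/2 := by
    intro a c; unfold gridNp; rw [hE', hE', hE', hE']; ring
  have rf : ∑ i : ZMod N, f (i - 1) = ∑ i : ZMod N, f i :=
    Equiv.sum_comp (Equiv.subRight (1 : ZMod N)) f
  have rg : ∑ i : ZMod N, g (i - 1) = ∑ i : ZMod N, g i :=
    Equiv.sum_comp (Equiv.subRight (1 : ZMod N)) g
  have rgx : ∑ i : ZMod N, g (x i) = ∑ i : ZMod N, g i := Equiv.sum_comp x g
  have rgy : ∑ i : ZMod N, g (y i) = ∑ i : ZMod N, g i := Equiv.sum_comp y g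
  have rgx1 : ∑ i : ZMod N, g (x i - 1) = ∑ i : ZMod N, g i := by
    rw [Equiv.sum_comp x (fun c => g (c - 1)), rg]
  have rgy1 : ∑ i : ZMod N, g (y i - 1) = ∑ i : ZMod N, g i := by
    rw [Equiv.sum_comp y (fun c => g (c - 1)), rg]
  have rgs : ∑ i : ZMod N, g (σO i) = ∑ i : ZMod N, g i := Equiv.sum_comp σO g
  unfold maslovIndex
  simp only [hnp]
  have lhs_eq : ∑ i : ZMod N,
      ((f i + f (i-1) + g (x i) + g (x i - 1))/2 + (f i + f (i-1) + g (y i) + g (y i - 1))/2)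
      = ∑ i : ZMod N, (f i + f (i-1) + (1/2) * g (x i) + (1/2) * g (x i - 1)
          + (1/2) * g (y i) + (1/2) * g (y i - 1)) := by
    apply Finset.sum_congr rfl; intro i _; ring
  rw [lhs_eq]
  simp only [Finset.sum_add_distrib, ← Finset.mul_sum]
  rw [rf, rgx, rgx1, rgy, rgy1]
  have rhs_eq : ∑ i : ZMod N, (E i (σO i) : ℚ) = ∑ i : ZMod N, (f i + g (σO i)) := by
    apply Finset.sum_congr rfl; intro i _; rw [hE']
  rw [rhs_eq]
  simp only [Finset.sum_add_distrib]
  rw [rgs]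
  ring

end


section
variable (N : ℕ) [NeZero N] (x y σO : GridGen N)

def Lf (i j : ZMod N) : ℚ :=
  (1/2) * (chi (j.val < i.val) * chi ((x j).val < (x i).val)
      + chi (i.val < j.val) * chi ((x i).val < (x j).val))
    - (1/2) * (chi (j.val < i.val) * chi ((y j).val < (y i).val)
      + chi (i.val < j.val) * chi ((y i).val < (y j).val))
    - 2 * ((1/2) * (chi (j.val < i.val) * chi ((σO j).val < (x i).val)
      + chi (i.val ≤ j.val) * chi ((x i).val ≤ (σO j).val)))
    + 2 * ((1/2) * (chi (j.val < i.val) * chi ((σO j).val < (y i).val)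
      + chi (i.val ≤ j.val) * chi ((y i).val ≤ (σO j).val)))

def Rtf (i j : ZMod N) : ℚ :=
  (1/4) * (2 * chi (i.val ≤ j.val) - chi (i.val = j.val)) *
      (2 * chi ((x i).val ≤ (x j).val) - chi ((x i).val = (x j).val)
        + 2 * chi ((x i).val ≤ (y j).val) - chi ((x i).val = (y j).val)
        - 2 * chi ((y i).val ≤ (x j).val) + chi ((y i).val = (x j).val)
        - 2 * chi ((y i).val ≤ (y j).val) + chi ((y i).val = (y j).val))
    - 2 * chi (i.val ≤ j.val) * (chi ((x i).val ≤ (σO j).val) - chi ((y i).val ≤ (σO j).val))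

def Cf (i j : ZMod N) : ℚ :=
  chi ((x i).val < (y j).val) - chi ((y j).val < (x i).val)
    + chi ((x j).val < (y i).val) - chi ((y i).val < (x j).val)

def Wf (i j : ZMod N) : ℚ := (1/4) * (2 * chi (i.val ≤ j.val) - chi (i.val = j.val))

def Df (i j : ZMod N) : ℚ :=
  - (1/2) * chi ((x i).val < (x j).val) + (1/2) * chi ((y i).val < (y j).val)
    + chi ((x i).val ≤ (σO j).val) - chi ((y i).val ≤ (σO j).val)
    - Wf N i j * Cf N x y i j

lemma L_eq (i j : ZMod N) :
    Lf N x y σO i j = Rtf N x y σO i j + Df N x y σO i j := by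
  have hvi : (i.val = j.val) ↔ i = j := (ZMod.val_injective N).eq_iff
  have hxy : (i.val = j.val) ↔ ((x i).val = (x j).val) :=
    hvi.trans (x.injective.eq_iff.symm.trans (ZMod.val_injective N).eq_iff.symm)
  have hys : (i.val = j.val) ↔ ((y i).val = (y j).val) :=
    hvi.trans (y.injective.eq_iff.symm.trans (ZMod.val_injective N).eq_iff.symm)
  unfold Lf Rtf Df Wf Cf
  linear_combination
    ptwise i.val j.val (x i).val (x j).val (y i).val (y j).val (σO j).val hxy hys

lemma dsub (f g : ZMod N → ZMod N → ℚ) :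
    ((∑ i : ZMod N, ∑ j : ZMod N, f i j) - ∑ i : ZMod N, ∑ j : ZMod N, g i j)
      = ∑ i : ZMod N, ∑ j : ZMod N, (f i j - g i j) := by
  rw [← Finset.sum_sub_distrib]
  exact Finset.sum_congr rfl fun i _ => (Finset.sum_sub_distrib _ _).symm

lemma dadd (f g : ZMod N → ZMod N → ℚ) :
    ((∑ i : ZMod N, ∑ j : ZMod N, f i j) + ∑ i : ZMod N, ∑ j : ZMod N, g i j)
      = ∑ i : ZMod N, ∑ j : ZMod N, (f i j + g i j) := by
  rw [← Finset.sum_add_distrib]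
  exact Finset.sum_congr rfl fun i _ => (Finset.sum_add_distrib).symm

lemma sumL :
    MaslovGrading N σO x - MaslovGrading N σO y
      = ∑ i : ZMod N, ∑ j : ZMod N, Lf N x y σO i j := by
  have hMz : ∀ z : GridGen N, MaslovGrading N σO z =
      (∑ i : ZMod N, ∑ j : ZMod N, Jpt (genPt N i (z i)) (genPt N j (z j)))
        - 2 * (∑ i : ZMod N, ∑ j : ZMod N, Jpt (genPt N i (z i)) (markPt N σO j))
        + (∑ i : ZMod N, ∑ j : ZMod N, Jpt (markPt N σO i) (markPt N σO j)) + 1 := by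
    intro z
    unfold MaslovGrading
    have hsplit : ∀ i : ZMod N, (∑ j : ZMod N,
        (Jpt (genPt N i (z i)) (genPt N j (z j)) - Jpt (genPt N i (z i)) (markPt N σO j) -
          Jpt (markPt N σO i) (genPt N j (z j)) + Jpt (markPt N σO i) (markPt N σO j)))
        = (∑ j : ZMod N, Jpt (genPt N i (z i)) (genPt N j (z j)))
          - (∑ j : ZMod N, Jpt (genPt N i (z i)) (markPt N σO j))
          - (∑ j : ZMod N, Jpt (markPt N σO i) (genPt N j (z j)))
          + ∑ j : ZMod N, Jpt (markPt N σO i) (markPt N σO j) := by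
      intro i
      rw [Finset.sum_add_distrib, Finset.sum_sub_distrib, Finset.sum_sub_distrib]
    rw [Finset.sum_congr rfl (fun i _ => hsplit i)]
    rw [Finset.sum_add_distrib, Finset.sum_sub_distrib, Finset.sum_sub_distrib]
    have hC : (∑ i : ZMod N, ∑ j : ZMod N, Jpt (markPt N σO i) (genPt N j (z j)))
        = ∑ i : ZMod N, ∑ j : ZMod N, Jpt (genPt N i (z i)) (markPt N σO j) := by
      rw [Finset.sum_comm]
      exact Finset.sum_congr rfl (fun i _ => Finset.sum_congr rfl (fun j _ => Jpt_comm _ _))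
    rw [hC]; ring
  rw [hMz x, hMz y]
  rw [show ∀ (A B C D mm one : ℚ), (A - 2*B + mm + one) - (C - 2*D + mm + one)
      = (A - C) + 2*(D - B) from fun _ _ _ _ _ _ => by ring]
  rw [dsub, dsub]
  simp only [Finset.mul_sum]
  rw [dadd]
  apply Finset.sum_congr rfl; intro i _
  apply Finset.sum_congr rfl; intro j _
  rw [Jgg, Jgg, Jgm, Jgm]
  unfold Lf
  ring

def phiQ (z : GridGen N) (α β : ℤ) (i : ZMod N) : ℚ :=
  (2 * chi ((i.val : ℤ) ≤ α) - chi ((i.val : ℤ) = α)) *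
    (2 * chi (((z i).val : ℤ) ≤ β) - chi (((z i).val : ℤ) = β))

lemma entf_cast (z : GridGen N) (α β : ℤ) (i : ZMod N) :
    ((entf N z α β i : ℤ) : ℚ) = chi ((i.val : ℤ) ≤ α) * chi (((z i).val : ℤ) ≤ β) := by
  unfold entf chi; split_ifs <;> (try norm_num) <;> tauto

lemma Gz_cast (α β : ℤ) : ((Gz N x y α β : ℤ) : ℚ)
    = ∑ i : ZMod N, (((entf N x α β i : ℤ) : ℚ) - ((entf N y α β i : ℤ) : ℚ)) := by
  unfold Gz; push_cast; rfl

lemma gridNp_D0 (a b : ZMod N) :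
    gridNp N (D0 N x y) a b
      = (1/4) * ∑ i : ZMod N, (phiQ N x (a.val) (b.val) i - phiQ N y (a.val) (b.val) i) := by
  unfold gridNp
  rw [D0_shift_left, D0_shift_right, D0_shift_both]
  show (((Gz N x y (a.val) (b.val) : ℤ) : ℚ) + ((Gz N x y ((a.val : ℤ) - 1) (b.val) : ℤ) : ℚ)
      + ((Gz N x y (a.val) ((b.val : ℤ) - 1) : ℤ) : ℚ)
      + ((Gz N x y ((a.val : ℤ) - 1) ((b.val : ℤ) - 1) : ℤ) : ℚ)) / 4 = _
  rw [Gz_cast, Gz_cast, Gz_cast, Gz_cast]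
  rw [← Finset.sum_add_distrib, ← Finset.sum_add_distrib, ← Finset.sum_add_distrib,
    Finset.sum_div, Finset.mul_sum]
  apply Finset.sum_congr rfl; intro i _
  rw [entf_cast, entf_cast, entf_cast, entf_cast, entf_cast, entf_cast, entf_cast, entf_cast]
  unfold phiQ
  set u1 := chi ((i.val : ℤ) ≤ (a.val : ℤ)) with hu1
  set u2 := chi ((i.val : ℤ) ≤ (a.val : ℤ) - 1) with hu2
  set ue := chi ((i.val : ℤ) = (a.val : ℤ)) with hue
  set vx1 := chi (((x i).val : ℤ) ≤ (b.val : ℤ)) with hvx1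
  set vx2 := chi (((x i).val : ℤ) ≤ (b.val : ℤ) - 1) with hvx2
  set vxe := chi (((x i).val : ℤ) = (b.val : ℤ)) with hvxe
  set vy1 := chi (((y i).val : ℤ) ≤ (b.val : ℤ)) with hvy1
  set vy2 := chi (((y i).val : ℤ) ≤ (b.val : ℤ) - 1) with hvy2
  set vye := chi (((y i).val : ℤ) = (b.val : ℤ)) with hvye
  have hx : u1 + u2 = 2 * u1 - ue := chi_pair_le _ _
  have hbx : vx1 + vx2 = 2 * vx1 - vxe := chi_pair_le _ _
  have hby : vy1 + vy2 = 2 * vy1 - vye := chi_pair_le _ _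
  linear_combination ((vx1 + vx2)/4 - (vy1 + vy2)/4) * hx
    + ((2*u1 - ue)/4) * hbx - ((2*u1 - ue)/4) * hby

lemma D0_cast (a b : ZMod N) : ((D0 N x y a b : ℤ) : ℚ)
    = ∑ i : ZMod N, (chi ((i.val : ℤ) ≤ (a.val : ℤ)) * chi (((x i).val : ℤ) ≤ (b.val : ℤ))
        - chi ((i.val : ℤ) ≤ (a.val : ℤ)) * chi (((y i).val : ℤ) ≤ (b.val : ℤ))) := by
  show ((Gz N x y (a.val) (b.val) : ℤ) : ℚ) = _
  rw [Gz_cast]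
  exact Finset.sum_congr rfl fun i _ => by rw [entf_cast, entf_cast]

lemma sumR :
    maslovIndex N x y (D0 N x y) - 2 * ∑ i : ZMod N, ((D0 N x y i (σO i) : ℤ) : ℚ)
      = ∑ i : ZMod N, ∑ j : ZMod N, Rtf N x y σO i j := by
  have h1 : maslovIndex N x y (D0 N x y) = ∑ j : ZMod N, ∑ i : ZMod N,
      (1/4) * ((phiQ N x (j.val) ((x j).val) i - phiQ N y (j.val) ((x j).val) i)
        + (phiQ N x (j.val) ((y j).val) i - phiQ N y (j.val) ((y j).val) i)) := by
    unfold maslovIndex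
    apply Finset.sum_congr rfl; intro j _
    rw [gridNp_D0, gridNp_D0, Finset.mul_sum, Finset.mul_sum, ← Finset.sum_add_distrib]
    apply Finset.sum_congr rfl; intro i _; ring
  have h2 : (2:ℚ) * ∑ j : ZMod N, ((D0 N x y j (σO j) : ℤ) : ℚ) = ∑ j : ZMod N, ∑ i : ZMod N,
      2 * (chi ((i.val : ℤ) ≤ (j.val : ℤ)) * chi (((x i).val : ℤ) ≤ ((σO j).val : ℤ))
        - chi ((i.val : ℤ) ≤ (j.val : ℤ)) * chi (((y i).val : ℤ) ≤ ((σO j).val : ℤ))) := by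
    rw [Finset.mul_sum]
    apply Finset.sum_congr rfl; intro j _
    rw [D0_cast, Finset.mul_sum]
  rw [h1, h2, dsub, Finset.sum_comm]
  apply Finset.sum_congr rfl; intro i _
  apply Finset.sum_congr rfl; intro j _
  unfold phiQ Rtf
  simp only [chi_int_le, chi_int_eq]
  ring

lemma perm_double (f : ZMod N → ZMod N → ℚ) (σ τ : GridGen N) :
    ∑ i : ZMod N, ∑ j : ZMod N, f (σ i) (τ j) = ∑ i : ZMod N, ∑ j : ZMod N, f i j := by
  have h1 : ∀ c : ZMod N, ∑ j : ZMod N, f c (τ j) = ∑ j : ZMod N, f c j :=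
    fun c => Equiv.sum_comp τ (f c)
  calc ∑ i : ZMod N, ∑ j : ZMod N, f (σ i) (τ j)
      = ∑ i : ZMod N, ∑ j : ZMod N, f (σ i) j := Finset.sum_congr rfl (fun i _ => h1 (σ i))
    _ = ∑ i : ZMod N, ∑ j : ZMod N, f i j := Equiv.sum_comp σ (fun c => ∑ j : ZMod N, f c j)

lemma lt_comm_sum :
    (∑ i : ZMod N, ∑ j : ZMod N, chi (j.val < i.val))
      = ∑ i : ZMod N, ∑ j : ZMod N, chi (i.val < j.val) := Finset.sum_comm

lemma sumWC : ∑ i : ZMod N, ∑ j : ZMod N, Wf N i j * Cf N x y i j = 0 := by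
  have hCsym : ∀ i j : ZMod N, Cf N x y j i = Cf N x y i j := by
    intro i j; unfold Cf; ring
  have hW : ∀ i j : ZMod N, Wf N i j + Wf N j i = 1/2 := fun i j => w_add i.val j.val
  have hswap : ∑ i : ZMod N, ∑ j : ZMod N, Wf N i j * Cf N x y i j
      = ∑ i : ZMod N, ∑ j : ZMod N, Wf N j i * Cf N x y i j := by
    rw [Finset.sum_comm]
    exact Finset.sum_congr rfl fun a _ => Finset.sum_congr rfl fun b _ => by rw [hCsym a b]
  have hCsum : ∑ i : ZMod N, ∑ j : ZMod N, Cf N x y i j = 0 := by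
    have c1 : (∑ i : ZMod N, ∑ j : ZMod N, chi ((x i).val < (y j).val))
        = ∑ i : ZMod N, ∑ j : ZMod N, chi (i.val < j.val) :=
      perm_double N (fun c d => chi (c.val < d.val)) x y
    have c2 : (∑ i : ZMod N, ∑ j : ZMod N, chi ((y j).val < (x i).val))
        = ∑ i : ZMod N, ∑ j : ZMod N, chi (i.val < j.val) := by
      rw [perm_double N (fun c d => chi (d.val < c.val)) x y]
      exact lt_comm_sum N
    have c3 : (∑ i : ZMod N, ∑ j : ZMod N, chi ((x j).val < (y i).val))
        = ∑ i : ZMod N, ∑ j : ZMod N, chi (i.val < j.val) := by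
      rw [perm_double N (fun c d => chi (d.val < c.val)) y x]
      exact lt_comm_sum N
    have c4 : (∑ i : ZMod N, ∑ j : ZMod N, chi ((y i).val < (x j).val))
        = ∑ i : ZMod N, ∑ j : ZMod N, chi (i.val < j.val) :=
      perm_double N (fun c d => chi (c.val < d.val)) y x
    unfold Cf
    simp only [Finset.sum_add_distrib, Finset.sum_sub_distrib]
    rw [c1, c2, c3, c4]
    ring
  have hdouble : 2 * (∑ i : ZMod N, ∑ j : ZMod N, Wf N i j * Cf N x y i j)
      = ∑ i : ZMod N, ∑ j : ZMod N, (1/2) * Cf N x y i j := by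
    rw [two_mul]
    nth_rewrite 2 [hswap]
    rw [dadd]
    apply Finset.sum_congr rfl; intro i _
    apply Finset.sum_congr rfl; intro j _
    rw [← add_mul, hW]
  have hhalf : (∑ i : ZMod N, ∑ j : ZMod N, (1/2) * Cf N x y i j)
      = (1/2) * ∑ i : ZMod N, ∑ j : ZMod N, Cf N x y i j := by
    simp only [Finset.mul_sum]
  rw [hhalf, hCsum] at hdouble
  linarith [hdouble]

lemma sumD : ∑ i : ZMod N, ∑ j : ZMod N, Df N x y σO i j = 0 := by
  have split : ∀ i j : ZMod N, Df N x y σO i j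
      = (- (1/2)) * chi ((x i).val < (x j).val) + (1/2) * chi ((y i).val < (y j).val)
        + (chi ((x i).val ≤ (σO j).val) - chi ((y i).val ≤ (σO j).val))
        + (-1 : ℚ) * (Wf N i j * Cf N x y i j) := by
    intro i j; unfold Df; ring
  simp only [split]
  simp only [Finset.sum_add_distrib, Finset.sum_sub_distrib, ← Finset.mul_sum]
  have e1 : (∑ i : ZMod N, ∑ j : ZMod N, chi ((x i).val < (x j).val))
      = ∑ i : ZMod N, ∑ j : ZMod N, chi (i.val < j.val) :=
    perm_double N (fun c d => chi (c.val < d.val)) x x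
  have e2 : (∑ i : ZMod N, ∑ j : ZMod N, chi ((y i).val < (y j).val))
      = ∑ i : ZMod N, ∑ j : ZMod N, chi (i.val < j.val) :=
    perm_double N (fun c d => chi (c.val < d.val)) y y
  have e3 : (∑ i : ZMod N, ∑ j : ZMod N, chi ((x i).val ≤ (σO j).val))
      = ∑ i : ZMod N, ∑ j : ZMod N, chi (i.val ≤ j.val) :=
    perm_double N (fun c d => chi (c.val ≤ d.val)) x σO
  have e4 : (∑ i : ZMod N, ∑ j : ZMod N, chi ((y i).val ≤ (σO j).val))
      = ∑ i : ZMod N, ∑ j : ZMod N, chi (i.val ≤ j.val) :=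
    perm_double N (fun c d => chi (c.val ≤ d.val)) y σO
  rw [e1, e2, e3, e4, sumWC]
  ring

lemma core :
    MaslovGrading N σO x - MaslovGrading N σO y
      = maslovIndex N x y (D0 N x y) - 2 * ∑ i : ZMod N, ((D0 N x y i (σO i) : ℤ) : ℚ) := by
  rw [sumL, sumR]
  have hL : ∀ i j : ZMod N, Lf N x y σO i j = Rtf N x y σO i j + Df N x y σO i j :=
    L_eq N x y σO
  calc (∑ i : ZMod N, ∑ j : ZMod N, Lf N x y σO i j)
      = ∑ i : ZMod N, ∑ j : ZMod N, (Rtf N x y σO i j + Df N x y σO i j) := by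
        exact Finset.sum_congr rfl fun i _ => Finset.sum_congr rfl fun j _ => hL i j
    _ = (∑ i : ZMod N, ∑ j : ZMod N, Rtf N x y σO i j)
        + ∑ i : ZMod N, ∑ j : ZMod N, Df N x y σO i j := (dadd N _ _).symm
    _ = ∑ i : ZMod N, ∑ j : ZMod N, Rtf N x y σO i j := by rw [sumD]; ring

end

end GridAux

open GridAux in
/-- For generators `x, y` and any `D ∈ 𝒟(x,y)`,
`M(x) − M(y) = μ(D) − 2·Σᵢ n_{Oᵢ}(D)`: the absolute Maslov grading refines the
relative Maslov grading computed from domains. -/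
theorem absolute_refines_relative_maslov (N : ℕ) [NeZero N] (hN : 2 ≤ N)
    (σO σX : GridGen N) (hσ : ∀ i : ZMod N, σO i ≠ σX i)
    (x y : GridGen N) (D : ZMod N → ZMod N → ℤ) (hD : IsGridDomain N x y D) :
    MaslovGrading N σO x - MaslovGrading N σO y =
      maslovIndex N x y D - 2 * ∑ i : ZMod N, (D i (σO i) : ℚ) := by
  have hker : ∀ a b : ZMod N, cornerSum N (fun a b => D a b - D0 N x y a b) a b = 0 := by
    intro a b
    have h1 := hD a b
    have h2 := cornerSum_D0 N x y a b
    have h3 := domain_rhs_eq N x y a b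
    have h4 : cornerSum N (fun a b => D a b - D0 N x y a b) a b
        = cornerSum N D a b - cornerSum N (D0 N x y) a b := by
      simp only [cornerSum]; ring
    rw [h4, h1, h3, h2]; ring
  have hmk := maslov_kernel N x y σO (fun a b => D a b - D0 N x y a b) hker
  have hgrid : ∀ a c : ZMod N, gridNp N D a c
      = gridNp N (D0 N x y) a c + gridNp N (fun a b => D a b - D0 N x y a b) a c := by
    intro a c; simp only [gridNp]; push_cast; ring
  have hmas : maslovIndex N x y D = maslovIndex N x y (D0 N x y)
      + maslovIndex N x y (fun a b => D a b - D0 N x y a b) := by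
    unfold maslovIndex
    rw [← Finset.sum_add_distrib]
    apply Finset.sum_congr rfl; intro i _
    rw [hgrid, hgrid]; ring
  have hsum : (∑ i : ZMod N, ((D i (σO i) : ℤ) : ℚ))
      = (∑ i : ZMod N, ((D0 N x y i (σO i) : ℤ) : ℚ))
        + ∑ i : ZMod N, (((fun a b => D a b - D0 N x y a b) i (σO i) : ℤ) : ℚ) := by
    rw [← Finset.sum_add_distrib]
    apply Finset.sum_congr rfl; intro i _
    push_cast; ring
  have hcore := core N x y σO
  rw [hmas, hsum]
  rw [hcore]
  rw [hmk]
  ring
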